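/- Circular assume-guarantee reasoning in PCL: for all propositional atoms a and b, the formula ((b ↠ a) ∧ (a ↠ b)) → (a ∧ b) is a theorem of PCL, i.e. ⊢ (b ↠ a) ∧ (a ↠ b) → a ∧ b. -/

import Mathlib

namespace Contracts

/-! ### PCL: propositional contract logic -/

inductive PCL (A : Type) : Type where
  | atom (a : A)
  | top
  | bot
  | and (p q : PCL A)
  | or (p q : PCL A)
  | imp (p q : PCL A)
  | cimp (p q : PCL A)    -- contractual implication ↠

namespace PCL

/-- Hilbert-style provability for PCL: intuitionistic propositional logic
extended with the axioms `⊤ ↠ ⊤`, `(p ↠ p) → p` and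
`(p' → p) → (p ↠ q) → (q → q') → (p' ↠ q')`. -/
inductive Proof {A : Type} : Set (PCL A) → PCL A → Prop where
  | ax {Γ : Set (PCL A)} {p} (h : p ∈ Γ) : Proof Γ p
  | mp {Γ} {p q} (h1 : Proof Γ (imp p q)) (h2 : Proof Γ p) : Proof Γ q
  | axK {Γ} {p q} : Proof Γ (imp p (imp q p))
  | axS {Γ} {p q r} : Proof Γ (imp (imp p (imp q r)) (imp (imp p q) (imp p r)))
  | andI {Γ} {p q} : Proof Γ (imp p (imp q (and p q)))
  | andE1 {Γ} {p q} : Proof Γ (imp (and p q) p)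
  | andE2 {Γ} {p q} : Proof Γ (imp (and p q) q)
  | orI1 {Γ} {p q} : Proof Γ (imp p (or p q))
  | orI2 {Γ} {p q} : Proof Γ (imp q (or p q))
  | orE {Γ} {p q r} : Proof Γ (imp (imp p r) (imp (imp q r) (imp (or p q) r)))
  | topI {Γ} : Proof Γ top
  | botE {Γ} {p} : Proof Γ (imp bot p)
  | cimpTop {Γ} : Proof Γ (cimp top top)
  | cimpFix {Γ} {p} : Proof Γ (imp (cimp p p) p)
  | cimpMono {Γ} {p p' q q'} :
      Proof Γ (imp (imp p' p) (imp (cimp p q) (imp (imp q q') (cimp p' q'))))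

end PCL

end Contracts


namespace Contracts.PCL

theorem Proof.weaken {A : Type} {Γ Γ' : Set (PCL A)} {p : PCL A}
    (h : Proof Γ p) (hs : Γ ⊆ Γ') : Proof Γ' p := by
  induction h with
  | ax h => exact .ax (hs h)
  | mp _ _ ih1 ih2 => exact .mp ih1 ih2
  | axK => exact .axK
  | axS => exact .axS
  | andI => exact .andI
  | andE1 => exact .andE1
  | andE2 => exact .andE2
  | orI1 => exact .orI1
  | orI2 => exact .orI2
  | orE => exact .orE
  | topI => exact .topI
  | botE => exact .botE
  | cimpTop => exact .cimpTop
  | cimpFix => exact .cimpFix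
  | cimpMono => exact .cimpMono

theorem Proof.id {A : Type} {Γ : Set (PCL A)} (p : PCL A) :
    Proof Γ (imp p p) :=
  .mp (.mp (.axS (q := imp p p)) .axK) .axK

/-- Deduction theorem. -/
theorem Proof.deduction {A : Type} {Γ : Set (PCL A)} {p q : PCL A}
    (h : Proof (insert p Γ) q) : Proof Γ (imp p q) := by
  induction h with
  | ax h =>
    rcases h with h | h
    · subst h; exact Proof.id _
    · exact .mp .axK (.ax h)
  | mp _ _ ih1 ih2 => exact .mp (.mp .axS ih1) ih2
  | axK => exact .mp .axK .axK
  | axS => exact .mp .axK .axS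
  | andI => exact .mp .axK .andI
  | andE1 => exact .mp .axK .andE1
  | andE2 => exact .mp .axK .andE2
  | orI1 => exact .mp .axK .orI1
  | orI2 => exact .mp .axK .orI2
  | orE => exact .mp .axK .orE
  | topI => exact .mp .axK .topI
  | botE => exact .mp .axK .botE
  | cimpTop => exact .mp .axK .cimpTop
  | cimpFix => exact .mp .axK .cimpFix
  | cimpMono => exact .mp .axK .cimpMono

end Contracts.PCL

open Contracts

/-- Circular assume-guarantee reasoning in PCL:
`⊢ (b ↠ a) ∧ (a ↠ b) → a ∧ b`. -/
theorem pcl_circular_handshake {A : Type} (a b : A) :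
    PCL.Proof (∅ : Set (PCL A))
      (.imp (.and (.cimp (.atom b) (.atom a)) (.cimp (.atom a) (.atom b)))
            (.and (.atom a) (.atom b))) := by
  apply PCL.Proof.deduction
  set A1 : PCL A := .cimp (.atom b) (.atom a)
  set A2 : PCL A := .cimp (.atom a) (.atom b)
  set Γ : Set (PCL A) := insert (PCL.and A1 A2) ∅
  have h1 : PCL.Proof Γ A1 := .mp .andE1 (.ax (Set.mem_insert _ _))
  have h2 : PCL.Proof Γ A2 := .mp .andE2 (.ax (Set.mem_insert _ _))
  -- Γ, b ⊢ a
  have hba : PCL.Proof Γ (.imp (.atom b) (.atom a)) := by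
    apply PCL.Proof.deduction
    have hb : PCL.Proof (insert (PCL.atom b) Γ) (.atom b) := .ax (Set.mem_insert _ _)
    have h1' : PCL.Proof (insert (PCL.atom b) Γ) A1 :=
      h1.weaken (Set.subset_insert _ _)
    have haa : PCL.Proof (insert (PCL.atom b) Γ) (.cimp (.atom a) (.atom a)) :=
      .mp (.mp (.mp .cimpMono (.mp .axK hb)) h1') (PCL.Proof.id _)
    exact .mp .cimpFix haa
  -- Γ ⊢ b → a ∧ b
  have hbab : PCL.Proof Γ (.imp (.atom b) (.and (.atom a) (.atom b))) := by
    apply PCL.Proof.deduction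
    have hb : PCL.Proof (insert (PCL.atom b) Γ) (.atom b) := .ax (Set.mem_insert _ _)
    have ha : PCL.Proof (insert (PCL.atom b) Γ) (.atom a) :=
      .mp (hba.weaken (Set.subset_insert _ _)) hb
    exact .mp (.mp .andI ha) hb
  -- Γ ⊢ (a∧b) ↠ (a∧b)
  have hcc : PCL.Proof Γ (.cimp (.and (.atom a) (.atom b)) (.and (.atom a) (.atom b))) :=
    .mp (.mp (.mp .cimpMono .andE1) h2) hbab
  exact .mp .cimpFix hcc
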